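/- arXiv:1409.0824 — 2 statements merged into one kernel-verified Lean document; each statement's English description precedes it below -/
import Mathlib

section
/- Let p, q, r be pairwise distinct sentential variables. Then C(p∧r, q) ∧ C(p∧¬r, q) ⊨_Δ C(p,q). -/
/-- Formulas of the preference language L, generated from sentential
variables by negation, conjunction, and the binary connective ⪰. -/
inductive Fml (α : Type) : Type where
  | var : α → Fml α
  | neg : Fml α → Fml α
  | conj : Fml α → Fml α → Fml α
  | succeq : Fml α → Fml α → Fml α

namespace Fml

variable {α : Type}

/-- φ∨ψ := ¬(¬φ∧¬ψ) -/
def disj (φ ψ : Fml α) : Fml α := neg (conj (neg φ) (neg ψ))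
/-- φ→ψ := ¬φ∨ψ -/
def impl (φ ψ : Fml α) : Fml α := disj (neg φ) ψ
/-- φ↔ψ := (φ→ψ)∧(ψ→φ) -/
def iffF (φ ψ : Fml α) : Fml α := conj (impl φ ψ) (impl ψ φ)
/-- φ≻ψ := (φ⪰ψ)∧¬(ψ⪰φ) -/
def succ (φ ψ : Fml α) : Fml α := conj (succeq φ ψ) (neg (succeq ψ φ))
/-- ⊤ := p→p for a fixed variable p -/
def topF (p : α) : Fml α := impl (var p) (var p)
/-- ⊥ := ¬⊤ -/
def botF (p : α) : Fml α := neg (topF p)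
/-- ◻φ := ¬(¬φ⪰¬φ) -/
def box (φ : Fml α) : Fml α := neg (succeq (neg φ) (neg φ))
/-- ◇φ := φ⪰φ -/
def dia (φ : Fml α) : Fml α := succeq φ φ
/-- Conditional obligation C(φ,ψ) := (φ∧ψ) ≻ (φ∧¬ψ) -/
def Cond (φ ψ : Fml α) : Fml α := succ (conj φ ψ) (conj φ (neg ψ))
/-- Obligation Oψ := C(⊤,ψ), where ⊤ uses the fixed variable p -/
def Ob (p : α) (ψ : Fml α) : Fml α := Cond (topF p) ψ
/-- Permission Pψ := ¬O¬ψ -/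
def Perm (p : α) (ψ : Fml α) : Fml α := neg (Ob p (neg ψ))

end Fml

/-- A model (W,S,U,T): a nonempty set of worlds, a selection function
picking a member of each nonempty set of worlds, a real-valued utility
function, and a truth-assignment. -/
structure Model (α : Type) : Type 1 where
  W : Type
  nonempty : Nonempty W
  S : W → Set W → W
  S_mem : ∀ (w : W) (A : Set W), A.Nonempty → S w A ∈ A
  U : W → ℝ
  T : α → Set W

open Classical in
/-- The proposition ⟦φ⟧_M expressed by φ in the model M. -/
noncomputable def sat {α : Type} (M : Model α) : Fml α → Set M.W
  | .var p => M.T p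
  | .neg θ => (sat M θ)ᶜ
  | .conj θ ψ => sat M θ ∩ sat M ψ
  | .succeq θ ψ =>
      if sat M θ = ∅ ∨ sat M ψ = ∅ then ∅
      else {w | M.U (M.S w (sat M θ)) ≥ M.U (M.S w (sat M ψ))}

/-- φ ⊨ ψ : in every model, ⟦φ⟧ ⊆ ⟦ψ⟧. -/
def Implies {α : Type} (φ ψ : Fml α) : Prop :=
  ∀ M : Model α, sat M φ ⊆ sat M ψ

/-- ⊨ φ : in every model, ⟦φ⟧ = W. -/
def Valid {α : Type} (φ : Fml α) : Prop :=
  ∀ M : Model α, sat M φ = Set.univ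

/-- S is a selection function on W = 𝒫(Props): for each world w and
nonempty set A of worlds, S w A ∈ A. -/
def IsSelection {α : Type} (S : Set α → Set (Set α) → Set α) : Prop :=
  ∀ (w : Set α) (A : Set (Set α)), A.Nonempty → S w A ∈ A

/-- S is Δ-based: no w₁ ∈ A has w Δ w₁ properly included in w Δ S(w,A). -/
def DeltaBased {α : Type} (S : Set α → Set (Set α) → Set α) : Prop :=
  ∀ (w : Set α) (A : Set (Set α)), A.Nonempty →
    ¬ ∃ w1 ∈ A, symmDiff w w1 ⊂ symmDiff w (S w A)

/-- A Δ model: W = 𝒫(Props), T(p) = {w | p ∈ w}, and a Δ-based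
selection function. -/
structure DeltaModel (α : Type) : Type where
  S : Set α → Set (Set α) → Set α
  S_mem : ∀ (w : Set α) (A : Set (Set α)), A.Nonempty → S w A ∈ A
  delta : DeltaBased S
  U : Set α → ℝ

/-- The underlying model of a Δ model. -/
def DeltaModel.toModel {α : Type} (M : DeltaModel α) : Model α where
  W := Set α
  nonempty := ⟨∅⟩
  S := M.S
  S_mem := M.S_mem
  U := M.U
  T := fun p => {w : Set α | p ∈ w}

/-- φ ⊨_Δ ψ : in every Δ model, ⟦φ⟧ ⊆ ⟦ψ⟧. -/
def DeltaImplies {α : Type} (φ ψ : Fml α) : Prop :=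
  ∀ M : DeltaModel α, sat M.toModel φ ⊆ sat M.toModel ψ

/-- The g-distance between two worlds: the (possibly infinite) sum of the
weights of the variables in their symmetric difference. -/
noncomputable def gdist {α : Type} (g : α → ℝ) (w0 w1 : Set α) : ENNReal :=
  ∑' v : ↥(symmDiff w0 w1), ENNReal.ofReal (g v)

/-- S is g-based: no w' ∈ A is strictly g-closer to w than S(w,A). -/
def GBased {α : Type} (g : α → ℝ) (S : Set α → Set (Set α) → Set α) : Prop :=
  ∀ (w : Set α) (A : Set (Set α)), A.Nonempty →
    ¬ ∃ w' ∈ A, gdist g w w' < gdist g w (S w A)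


open Fml in
lemma sel_eq {α : Type} (M : DeltaModel α) (w u : Set α) (A : Set (Set α))
    (hu : u ∈ A) (hmin : ∀ a ∈ A, symmDiff w u ⊆ symmDiff w a) :
    M.S w A = u := by
  have hne : A.Nonempty := ⟨u, hu⟩
  have hs := M.S_mem w A hne
  have h1 : symmDiff w u ⊆ symmDiff w (M.S w A) := hmin _ hs
  by_contra hne'
  exact M.delta w A hne ⟨u, hu, h1, fun h2 =>
    hne' (symmDiff_right_injective w (le_antisymm h1 h2)).symm⟩

lemma sel_form {α : Type} (M : DeltaModel α) (w : Set α) (A : Set (Set α))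
    (P N : Set α) (hu : (w ∪ P) \ N ∈ A)
    (hc : ∀ a ∈ A, P ⊆ a ∧ ∀ x ∈ N, x ∉ a) :
    M.S w A = (w ∪ P) \ N := by
  apply sel_eq M w _ A hu
  intro a ha x hx
  obtain ⟨hP, hN⟩ := hc a ha
  rw [Set.mem_symmDiff] at hx ⊢
  rcases hx with ⟨hxw, hxu⟩ | ⟨hxu, hxw⟩
  · -- x ∈ w, x ∉ (w∪P)\N  ⇒ x ∈ N ⇒ x ∉ a
    have hxN : x ∈ N := by
      by_contra hxN
      exact hxu ⟨Or.inl hxw, hxN⟩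
    exact Or.inl ⟨hxw, hN x hxN⟩
  · -- x ∈ (w∪P)\N, x ∉ w ⇒ x ∈ P ⇒ x ∈ a
    have hxP : x ∈ P := hxu.1.resolve_left hxw
    exact Or.inr ⟨hP hxP, hxw⟩

open Fml in
lemma sat_cond {α : Type} (M : Model α) (φ ψ : Fml α)
    (hA : (sat M (conj φ ψ)).Nonempty) (hB : (sat M (conj φ (neg ψ))).Nonempty)
    (w : M.W) :
    w ∈ sat M (Cond φ ψ) ↔
      M.U (M.S w (sat M (conj φ (neg ψ)))) < M.U (M.S w (sat M (conj φ ψ))) := by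
  have h1 : ¬ (sat M (conj φ ψ) = ∅ ∨ sat M (conj φ (neg ψ)) = ∅) := by
    rw [not_or]; exact ⟨hA.ne_empty, hB.ne_empty⟩
  have h2 : ¬ (sat M (conj φ (neg ψ)) = ∅ ∨ sat M (conj φ ψ) = ∅) := by
    rw [not_or]; exact ⟨hB.ne_empty, hA.ne_empty⟩
  show w ∈ sat M (.conj (.succeq (conj φ ψ) (conj φ (neg ψ))) (.neg (.succeq (conj φ (neg ψ)) (conj φ ψ)))) ↔ _
  simp only [sat] at h1 h2 ⊢
  simp only [Set.mem_inter_iff, Set.mem_compl_iff, h1, h2, or_self, or_false, if_false, ↓reduceIte]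
  simp only [Set.mem_setOf_eq]
  rw [lt_iff_le_not_ge]

open Fml in
theorem stmt_14 {α : Type} (p q r : α) (hpq : p ≠ q) (hpr : p ≠ r) (hqr : q ≠ r) :
    DeltaImplies
      (conj (Cond (conj (var p) (var r)) (var q))
            (Cond (conj (var p) (neg (var r))) (var q)))
      (Cond (var p) (var q)) := by
  intro M w hw
  -- set equalities
  have eA : sat M.toModel (conj (var p) (var q)) = {a : Set α | p ∈ a ∧ q ∈ a} := by
    ext a; simp [sat, DeltaModel.toModel]; exact Iff.rfl
  have eB : sat M.toModel (conj (var p) (neg (var q))) = {a : Set α | p ∈ a ∧ q ∉ a} := by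
    ext a; simp [sat, DeltaModel.toModel]; exact Iff.rfl
  have eA1 : sat M.toModel (conj (conj (var p) (var r)) (var q))
      = {a : Set α | (p ∈ a ∧ r ∈ a) ∧ q ∈ a} := by
    ext a; simp [sat, DeltaModel.toModel]; exact Iff.rfl
  have eB1 : sat M.toModel (conj (conj (var p) (var r)) (neg (var q)))
      = {a : Set α | (p ∈ a ∧ r ∈ a) ∧ q ∉ a} := by
    ext a; simp [sat, DeltaModel.toModel]; exact Iff.rfl
  have eA2 : sat M.toModel (conj (conj (var p) (neg (var r))) (var q))
      = {a : Set α | (p ∈ a ∧ r ∉ a) ∧ q ∈ a} := by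
    ext a; simp [sat, DeltaModel.toModel]; exact Iff.rfl
  have eB2 : sat M.toModel (conj (conj (var p) (neg (var r))) (neg (var q)))
      = {a : Set α | (p ∈ a ∧ r ∉ a) ∧ q ∉ a} := by
    ext a; simp [sat, DeltaModel.toModel]; exact Iff.rfl
  -- nonemptiness
  have hAne : (sat M.toModel (conj (var p) (var q))).Nonempty := by
    exact ⟨({p, q} : Set α), by rw [eA]; show _ ∈ {a : Set α | _}; simp [hpq, hpr, hqr, hpq.symm, hpr.symm, hqr.symm]⟩
  have hBne : (sat M.toModel (conj (var p) (neg (var q)))).Nonempty := by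
    exact ⟨({p} : Set α), by rw [eB]; show _ ∈ {a : Set α | _}; simp [hpq, hpr, hqr, hpq.symm, hpr.symm, hqr.symm]⟩
  have hA1ne : (sat M.toModel (conj (conj (var p) (var r)) (var q))).Nonempty := by
    exact ⟨({p, r, q} : Set α), by rw [eA1]; show _ ∈ {a : Set α | _}; simp [hpq, hpr, hqr, hpq.symm, hpr.symm, hqr.symm]⟩
  have hB1ne : (sat M.toModel (conj (conj (var p) (var r)) (neg (var q)))).Nonempty := by
    exact ⟨({p, r} : Set α), by rw [eB1]; show _ ∈ {a : Set α | _}; simp [hpq, hpr, hqr, hpq.symm, hpr.symm, hqr.symm]⟩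
  have hA2ne : (sat M.toModel (conj (conj (var p) (neg (var r))) (var q))).Nonempty := by
    exact ⟨({p, q} : Set α), by rw [eA2]; show _ ∈ {a : Set α | _}; simp [hpq, hpr, hqr, hpq.symm, hpr.symm, hqr.symm]⟩
  have hB2ne : (sat M.toModel (conj (conj (var p) (neg (var r))) (neg (var q)))).Nonempty := by
    exact ⟨({p} : Set α), by rw [eB2]; show _ ∈ {a : Set α | _}; simp [hpq, hpr, hqr, hpq.symm, hpr.symm, hqr.symm]⟩
  -- hypotheses
  have hw1 : w ∈ sat M.toModel (Cond (conj (var p) (var r)) (var q)) := hw.1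
  have hw2 : w ∈ sat M.toModel (Cond (conj (var p) (neg (var r))) (var q)) := hw.2
  rw [sat_cond _ _ _ hA1ne hB1ne] at hw1
  rw [sat_cond _ _ _ hA2ne hB2ne] at hw2
  rw [sat_cond _ _ _ hAne hBne]
  -- move to the Set α world
  have hw1' : M.U (M.S w (sat M.toModel (conj (conj (var p) (var r)) (neg (var q)))))
      < M.U (M.S w (sat M.toModel (conj (conj (var p) (var r)) (var q)))) := hw1
  have hw2' : M.U (M.S w (sat M.toModel (conj (conj (var p) (neg (var r))) (neg (var q)))))
      < M.U (M.S w (sat M.toModel (conj (conj (var p) (neg (var r))) (var q)))) := hw2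
  show M.U (M.S w (sat M.toModel (conj (var p) (neg (var q)))))
      < M.U (M.S w (sat M.toModel (conj (var p) (var q))))
  rw [eA, eB]; rw [eA1, eB1] at hw1'; rw [eA2, eB2] at hw2'
  set w' : Set α := w with hw'def
  by_cases hr : r ∈ w'
  · have hSA := sel_form M w' {a : Set α | p ∈ a ∧ q ∈ a} {p, q} ∅
      (by simp [hr, hpq, hpr, hqr, hpq.symm, hpr.symm, hqr.symm]) (by
        rintro a ⟨h1, h2⟩
        exact ⟨by intro x hx; rcases hx with h | h <;> simp_all, by simp⟩)
    have hSA1 := sel_form M w' {a : Set α | (p ∈ a ∧ r ∈ a) ∧ q ∈ a} {p, q} ∅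
      (by simp [hr, hpq, hpr, hqr, hpq.symm, hpr.symm, hqr.symm]) (by
        rintro a ⟨⟨h1, h2⟩, h3⟩
        exact ⟨by intro x hx; rcases hx with h | h <;> simp_all, by simp⟩)
    have hSB := sel_form M w' {a : Set α | p ∈ a ∧ q ∉ a} {p} {q}
      (by simp [hr, hpq, hpr, hqr, hpq.symm, hpr.symm, hqr.symm]) (by
        rintro a ⟨h1, h2⟩
        exact ⟨by intro x hx; simp_all, by simpa using h2⟩)
    have hSB1 := sel_form M w' {a : Set α | (p ∈ a ∧ r ∈ a) ∧ q ∉ a} {p} {q}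
      (by simp [hr, hpq, hpr, hqr, hpq.symm, hpr.symm, hqr.symm]) (by
        rintro a ⟨⟨h1, h2⟩, h3⟩
        exact ⟨by intro x hx; simp_all, by simpa using h3⟩)
    rw [hSA, hSB]
    rw [hSA1, hSB1] at hw1'
    exact hw1'
  · have hSA := sel_form M w' {a : Set α | p ∈ a ∧ q ∈ a} {p, q} ∅
      (by simp [hr, hpq, hpr, hqr, hpq.symm, hpr.symm, hqr.symm]) (by
        rintro a ⟨h1, h2⟩
        exact ⟨by intro x hx; rcases hx with h | h <;> simp_all, by simp⟩)
    have hSA2 := sel_form M w' {a : Set α | (p ∈ a ∧ r ∉ a) ∧ q ∈ a} {p, q} ∅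
      (by simp [hr, hpq, hpr, hqr, hpq.symm, hpr.symm, hqr.symm]) (by
        rintro a ⟨⟨h1, h2⟩, h3⟩
        exact ⟨by intro x hx; rcases hx with h | h <;> simp_all, by simp⟩)
    have hSB := sel_form M w' {a : Set α | p ∈ a ∧ q ∉ a} {p} {q}
      (by simp [hr, hpq, hpr, hqr, hpq.symm, hpr.symm, hqr.symm]) (by
        rintro a ⟨h1, h2⟩
        exact ⟨by intro x hx; simp_all, by simpa using h2⟩)
    have hSB2 := sel_form M w' {a : Set α | (p ∈ a ∧ r ∉ a) ∧ q ∉ a} {p} {q}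
      (by simp [hr, hpq, hpr, hqr, hpq.symm, hpr.symm, hqr.symm]) (by
        rintro a ⟨⟨h1, h2⟩, h3⟩
        exact ⟨by intro x hx; simp_all, by simpa using h3⟩)
    rw [hSA, hSB]
    rw [hSA2, hSB2] at hw2'
    exact hw2'
end

section
/- Let p, q, r be pairwise distinct sentential variables and let G be the class of weighting functions g with g(q) > g(p) and g(q) > g(r). Then O(p∨q) ∧ ¬q ⊨_G Op, i.e., ⟦O(p∨q) ∧ ¬q⟧_M ⊆ ⟦Op⟧_M for every g∈G, every g-based selection function S, and every Δ model M whose selection function is S. -/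
section Aux

open ENNReal

variable {α : Type}

lemma gdist_self (g : α → ℝ) (w : Set α) : gdist g w w = 0 := by
  simp [gdist, symmDiff_self, Set.bot_eq_empty]

lemma le_gdist (g : α → ℝ) {w v : Set α} {x : α} (hx : x ∈ symmDiff w v) :
    ENNReal.ofReal (g x) ≤ gdist g w v :=
  ENNReal.le_tsum (⟨x, hx⟩ : ↥(symmDiff w v))

lemma gdist_pos (g : α → ℝ) (hg : ∀ v, 0 < g v) {w v : Set α} (h : v ≠ w) :
    0 < gdist g w v := by
  have hne : symmDiff w v ≠ ⊥ := fun hb => h (symmDiff_eq_bot.mp hb).symm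
  obtain ⟨x, hx⟩ := Set.nonempty_iff_ne_empty.mpr hne
  exact lt_of_lt_of_le (ENNReal.ofReal_pos.mpr (hg x)) (le_gdist g hx)

lemma gdist_singleton (g : α → ℝ) {w v : Set α} {x : α} (h : symmDiff w v = {x}) :
    gdist g w v = ENNReal.ofReal (g x) := by
  unfold gdist
  rw [h]
  exact tsum_singleton x (fun y => ENNReal.ofReal (g y))

lemma pair_le_gdist (g : α → ℝ) {w v : Set α} {x y : α} (hx : x ∈ symmDiff w v)
    (hy : y ∈ symmDiff w v) (hxy : x ≠ y) :
    ENNReal.ofReal (g x) + ENNReal.ofReal (g y) ≤ gdist g w v := by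
  classical
  have hne : (⟨x, hx⟩ : ↥(symmDiff w v)) ≠ ⟨y, hy⟩ := by
    intro h; exact hxy (congrArg Subtype.val h)
  have := ENNReal.sum_le_tsum (f := fun z : ↥(symmDiff w v) => ENNReal.ofReal (g z))
    ({⟨x, hx⟩, ⟨y, hy⟩} : Finset ↥(symmDiff w v))
  rwa [Finset.sum_pair hne] at this

lemma gdist_lt (g : α → ℝ) (hg : ∀ v, 0 < g v) {w v : Set α} {x y : α}
    (hx : x ∈ symmDiff w v) (hy : y ∈ symmDiff w v) (hxy : x ≠ y) :
    ENNReal.ofReal (g x) < gdist g w v :=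
  lt_of_lt_of_le
    (ENNReal.lt_add_right ENNReal.ofReal_ne_top
      (ne_of_gt (ENNReal.ofReal_pos.mpr (hg y))))
    (pair_le_gdist g hx hy hxy)

/-- If `c ∈ A` is strictly `g`-closest to `w`, then a `g`-based selection picks `c`. -/
lemma gbased_unique (g : α → ℝ) (M : DeltaModel α) (hgb : GBased g M.S)
    (w c : Set α) (A : Set (Set α)) (hc : c ∈ A)
    (huniq : ∀ v ∈ A, v ≠ c → gdist g w c < gdist g w v) : M.S w A = c := by
  by_contra h
  exact hgb w A ⟨c, hc⟩ ⟨c, hc, huniq _ (M.S_mem w A ⟨c, hc⟩) h⟩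

lemma mem_succeq_iff (M : Model α) (θ ψ : Fml α) (w : M.W) :
    w ∈ sat M (.succeq θ ψ) ↔
      (sat M θ).Nonempty ∧ (sat M ψ).Nonempty ∧
        M.U (M.S w (sat M θ)) ≥ M.U (M.S w (sat M ψ)) := by
  by_cases h : sat M θ = ∅ ∨ sat M ψ = ∅
  · simp only [sat, if_pos h, Set.mem_empty_iff_false, false_iff]
    rintro ⟨h1, h2, -⟩
    rcases h with h | h
    · exact Set.nonempty_iff_ne_empty.mp h1 h
    · exact Set.nonempty_iff_ne_empty.mp h2 h
  · have hne := not_or.mp h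
    simp only [sat, if_neg h, Set.mem_setOf_eq]
    exact ⟨fun hw => ⟨Set.nonempty_iff_ne_empty.mpr hne.1,
      Set.nonempty_iff_ne_empty.mpr hne.2, hw⟩, fun h3 => h3.2.2⟩

lemma sat_top (M : DeltaModel α) (p0 : α) :
    sat M.toModel (Fml.topF p0) = Set.univ := by
  ext v
  simp only [sat, Fml.topF, Fml.impl, Fml.disj, Set.mem_compl_iff, Set.mem_inter_iff,
    Set.mem_univ, iff_true, not_and, not_not]
  exact fun h => h

lemma mem_Ob_iff (M : DeltaModel α) (p0 : α) (ψ : Fml α) (w : Set α) :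
    w ∈ sat M.toModel (Fml.Ob p0 ψ) ↔
      (sat M.toModel ψ).Nonempty ∧ ((sat M.toModel ψ)ᶜ).Nonempty ∧
        M.U (M.S w (sat M.toModel ψ)) > M.U (M.S w ((sat M.toModel ψ)ᶜ)) := by
  have hC : sat M.toModel (Fml.conj (Fml.topF p0) ψ) = sat M.toModel ψ := by
    show sat M.toModel (Fml.topF p0) ∩ sat M.toModel ψ = _
    rw [sat_top, Set.univ_inter]
  have hD : sat M.toModel (Fml.conj (Fml.topF p0) (Fml.neg ψ)) = (sat M.toModel ψ)ᶜ := by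
    show sat M.toModel (Fml.topF p0) ∩ (sat M.toModel ψ)ᶜ = _
    rw [sat_top, Set.univ_inter]
  have : (id w : M.toModel.W) ∈ sat M.toModel (Fml.Ob p0 ψ) ↔
      (id w : M.toModel.W) ∈ sat M.toModel (Fml.succeq (Fml.conj (Fml.topF p0) ψ)
            (Fml.conj (Fml.topF p0) (Fml.neg ψ))) ∧
      ¬ (id w : M.toModel.W) ∈ sat M.toModel (Fml.succeq (Fml.conj (Fml.topF p0) (Fml.neg ψ))
            (Fml.conj (Fml.topF p0) ψ)) := by
    rfl
  refine this.trans ?_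
  rw [mem_succeq_iff, mem_succeq_iff, hC, hD]
  constructor
  · rintro ⟨⟨h1, h2, h3⟩, h4⟩
    refine ⟨h1, h2, ?_⟩
    rcases lt_or_ge (M.U (M.S w ((sat M.toModel ψ)ᶜ))) (M.U (M.S w (sat M.toModel ψ))) with h | h
    · exact h
    · exact absurd ⟨h2, h1, h⟩ h4
  · rintro ⟨h1, h2, h3⟩
    exact ⟨⟨h1, h2, le_of_lt h3⟩, fun h => absurd h.2.2 (not_le.mpr h3)⟩

lemma symmDiff_union_singleton {w : Set α} {x : α} (hx : x ∉ w) :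
    symmDiff w (w ∪ {x}) = {x} := by
  ext y
  constructor
  · intro h
    rcases Set.mem_symmDiff.mp h with ⟨hyw, hn⟩ | ⟨hy, hyw⟩
    · exact absurd (Set.mem_union_left _ hyw) hn
    · rcases hy with hyw2 | hyx
      · exact absurd hyw2 hyw
      · exact hyx
  · intro hy
    have hyx : y = x := hy
    subst hyx
    exact Set.mem_symmDiff.mpr (Or.inr ⟨Set.mem_union_right _ rfl, hx⟩)

lemma symmDiff_diff_singleton {w : Set α} {x : α} (hx : x ∈ w) :
    symmDiff w (w \ {x}) = {x} := by
  ext y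
  constructor
  · intro h
    rcases Set.mem_symmDiff.mp h with ⟨hyw, hn⟩ | ⟨hyd, hnw⟩
    · by_contra hne
      exact hn ⟨hyw, hne⟩
    · exact absurd hyd.1 hnw
  · intro hy
    have hyx : y = x := hy
    subst hyx
    exact Set.mem_symmDiff.mpr (Or.inl ⟨hx, fun hd => hd.2 rfl⟩)

lemma eq_of_symmDiff_singleton {w v c : Set α} {x : α}
    (hv : symmDiff w v = {x}) (hc : symmDiff w c = {x}) : v = c :=
  symmDiff_right_injective w (hv.trans hc.symm)

/-- Second element of a non-singleton symmetric difference containing `x`. -/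
lemma exists_other {w v : Set α} {x : α} (hx : x ∈ symmDiff w v)
    (hne : symmDiff w v ≠ {x}) : ∃ y ∈ symmDiff w v, y ≠ x := by
  by_contra h
  push_neg at h
  exact hne (Set.eq_singleton_iff_unique_mem.mpr ⟨hx, h⟩)

end Aux

open Fml in
theorem stmt_17 {α : Type} (p q r : α) (hpq : p ≠ q) (hpr : p ≠ r) (hqr : q ≠ r)
    (p0 : α) (g : α → ℝ) (hg : ∀ v, 0 < g v) (hgp : g q > g p) (hgr : g q > g r)
    (M : DeltaModel α) (hgb : GBased g M.S) :
    sat M.toModel (conj (Ob p0 (disj (var p) (var q))) (neg (var q)))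
      ⊆ sat M.toModel (Ob p0 (var p)) := by
  suffices h : ∀ w : Set α, w ∈ sat M.toModel (conj (Ob p0 (disj (var p) (var q)))
      (neg (var q))) → w ∈ sat M.toModel (Ob p0 (var p)) from fun w hw => h w hw
  intro w hw
  have hO : w ∈ sat M.toModel (Ob p0 (disj (var p) (var q))) := hw.1
  have hq : q ∉ w := hw.2
  rw [mem_Ob_iff] at hO
  rw [mem_Ob_iff]
  have hA : sat M.toModel (disj (var p) (var q)) = {v : Set α | p ∈ v ∨ q ∈ v} := by
    ext v
    simp only [sat, Fml.disj, DeltaModel.toModel, Set.mem_compl_iff, Set.mem_inter_iff,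
      Set.mem_setOf_eq, not_and, not_not]
    show ¬ (p ∉ (@id (Set α) v) ∧ q ∉ (@id (Set α) v)) ↔ (p ∈ (@id (Set α) v) ∨ q ∈ (@id (Set α) v))
    tauto
  have hP : sat M.toModel (var p) = {v : Set α | p ∈ v} := rfl
  rw [hA] at hO
  rw [hP]
  obtain ⟨-, -, hU⟩ := hO
  refine ⟨⟨({p} : Set α), by exact rfl⟩, ⟨(∅ : Set α), by exact fun h => h⟩, ?_⟩
  by_cases hp : p ∈ w
  · have e1 : M.S w {v : Set α | p ∈ v ∨ q ∈ v} = w :=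
      gbased_unique g M hgb w w _ (Or.inl hp)
        (fun v _ hne => by rw [gdist_self]; exact gdist_pos g hg hne)
    have e2 : M.S w {v : Set α | p ∈ v} = w :=
      gbased_unique g M hgb w w _ hp
        (fun v _ hne => by rw [gdist_self]; exact gdist_pos g hg hne)
    have key : ∀ v : Set α, p ∉ v → v ≠ w \ {p} →
        gdist g w (w \ {p}) < gdist g w v := by
      intro v hpv hne
      rw [gdist_singleton g (symmDiff_diff_singleton hp)]
      have hmem : p ∈ symmDiff w v := Set.mem_symmDiff.mpr (Or.inl ⟨hp, hpv⟩)
      have hne2 : symmDiff w v ≠ {p} := fun h =>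
        hne (eq_of_symmDiff_singleton h (symmDiff_diff_singleton hp))
      obtain ⟨y, hy, hyp⟩ := exists_other hmem hne2
      exact gdist_lt g hg hmem hy (Ne.symm hyp)
    have e3 : M.S w ({v : Set α | p ∈ v ∨ q ∈ v}ᶜ) = w \ {p} := by
      refine gbased_unique g M hgb w _ _ ?_ ?_
      · simp [hq]
      · intro v hv hne
        have hpv : p ∉ v := fun h => hv (Or.inl h)
        exact key v hpv hne
    have e4 : M.S w ({v : Set α | p ∈ v}ᶜ) = w \ {p} := by
      refine gbased_unique g M hgb w _ _ ?_ ?_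
      · simp
      · intro v hv hne
        exact key v hv hne
    rw [e2, e4]
    rw [e1, e3] at hU
    exact hU
  · have hpw : p ∉ w := hp
    have hsd : symmDiff w (w ∪ {p}) = {p} := symmDiff_union_singleton hpw
    have keyp : ∀ v : Set α, p ∈ v → v ≠ w ∪ {p} →
        gdist g w (w ∪ {p}) < gdist g w v := by
      intro v hpv hne
      rw [gdist_singleton g hsd]
      have hmem : p ∈ symmDiff w v := Set.mem_symmDiff.mpr (Or.inr ⟨hpv, hpw⟩)
      have hne2 : symmDiff w v ≠ {p} := fun h =>
        hne (eq_of_symmDiff_singleton h hsd)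
      obtain ⟨y, hy, hyp⟩ := exists_other hmem hne2
      exact gdist_lt g hg hmem hy (Ne.symm hyp)
    have e1 : M.S w {v : Set α | p ∈ v ∨ q ∈ v} = w ∪ {p} := by
      refine gbased_unique g M hgb w _ _ (Or.inl (by simp)) ?_
      intro v hv hne
      by_cases hpv : p ∈ v
      · exact keyp v hpv hne
      · have hqv : q ∈ v := hv.resolve_left hpv
        have hmem : q ∈ symmDiff w v := Set.mem_symmDiff.mpr (Or.inr ⟨hqv, hq⟩)
        rw [gdist_singleton g hsd]
        exact lt_of_lt_of_le
          ((ENNReal.ofReal_lt_ofReal_iff (lt_trans (hg p) hgp)).mpr hgp)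
          (le_gdist g hmem)
    have e2 : M.S w {v : Set α | p ∈ v} = w ∪ {p} := by
      refine gbased_unique g M hgb w _ _ (by simp) ?_
      intro v hv hne
      exact keyp v hv hne
    have e3 : M.S w ({v : Set α | p ∈ v ∨ q ∈ v}ᶜ) = w := by
      refine gbased_unique g M hgb w _ _ (by simp [hpw, hq]) ?_
      intro v _ hne
      rw [gdist_self]
      exact gdist_pos g hg hne
    have e4 : M.S w ({v : Set α | p ∈ v}ᶜ) = w := by
      refine gbased_unique g M hgb w _ _ (by simp [hpw]) ?_
      intro v _ hne
      rw [gdist_self]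
      exact gdist_pos g hg hne
    rw [e2, e4]
    rw [e1, e3] at hU
    exact hU
end
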